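/- Let d be a positive rational with √d irrational and let a ∈ ℚ[√d] with 1 < ā < a. Then there exist infinitely many distinct b ∈ ℚ[√d] such that ln G(b) / ln G(b̄) = ln G(a) / ln G(ā) and the standard trapezoid t(b) admits a trivial tiling by homothetic copies of the standard trapezoid t(a), where G(x) = (x−1)/(x+1). -/

import Mathlib

noncomputable section

/-- The homothetic copy of a plane figure `S` under `x ↦ r • x + v`. -/
def homothety (r : ℝ) (v : ℝ × ℝ) (S : Set (ℝ × ℝ)) : Set (ℝ × ℝ) :=
  (fun x : ℝ × ℝ => (r * x.1 + v.1, r * x.2 + v.2)) '' S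

/-- `S` is tiled by homothetic copies of figures from the family `F`:
`S` is a union of finitely many homothetic copies of members of `F`
whose interiors are pairwise disjoint. -/
def IsTiling (S : Set (ℝ × ℝ)) (F : Set (Set (ℝ × ℝ))) : Prop :=
  ∃ (n : ℕ) (r : Fin n → ℝ) (v : Fin n → ℝ × ℝ) (t : Fin n → Set (ℝ × ℝ)),
    (∀ i, t i ∈ F) ∧ (∀ i, 0 < r i) ∧
    S = ⋃ i, homothety (r i) (v i) (t i) ∧
    ∀ i j, i ≠ j →
      interior (homothety (r i) (v i) (t i)) ∩ interior (homothety (r j) (v j) (t j)) = ∅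
/-- The standard trapezoid `t(a)`: unit height, horizontal bases `a+1` and `a-1`,
base angles `45°`, midline `a`. -/
def stdTrap (a : ℝ) : Set (ℝ × ℝ) :=
  convexHull ℝ ({(0, 0), (a + 1, 0), (a, 1), (1, 1)} : Set (ℝ × ℝ))

/-- The standard parallelogram `p(a)`: unit height, horizontal bases of length `a`. -/
def stdPar (a : ℝ) : Set (ℝ × ℝ) :=
  convexHull ℝ ({(0, 0), (a, 0), (a + 1, 1), (1, 1)} : Set (ℝ × ℝ))
/-- `S` admits a trivial tiling by homothetic copies of members of `F`: either it is a
single homothetic copy of a member of `F`, or some line segment divides it into two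
figures, each admitting a trivial tiling. -/
inductive TrivialTiling (F : Set (Set (ℝ × ℝ))) : Set (ℝ × ℝ) → Prop
  | single (r : ℝ) (v : ℝ × ℝ) (t : Set (ℝ × ℝ)) :
      0 < r → t ∈ F → TrivialTiling F (homothety r v t)
  | split (S S₁ S₂ : Set (ℝ × ℝ)) (x y : ℝ × ℝ) :
      TrivialTiling F S₁ → TrivialTiling F S₂ →
      S = S₁ ∪ S₂ → interior S₁ ∩ interior S₂ = ∅ →
      S₁ ∩ S₂ ⊆ segment ℝ x y →
      TrivialTiling F S
/-- `G(x) = (x-1)/(x+1)`. -/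
def Gfun (x : ℝ) : ℝ := (x - 1) / (x + 1)


def ConjPair (d : ℚ) (x y : ℝ) : Prop :=
  ∃ p q : ℚ, x = (p : ℝ) + (q : ℝ) * Real.sqrt d ∧ y = (p : ℝ) - (q : ℝ) * Real.sqrt d

lemma cp_rat (d r : ℚ) : ConjPair d (r : ℝ) (r : ℝ) := ⟨r, 0, by simp, by simp⟩

lemma cp_add {d : ℚ} {x y x' y' : ℝ} (h : ConjPair d x y) (h' : ConjPair d x' y') :
    ConjPair d (x + x') (y + y') := by
  obtain ⟨p, q, rfl, rfl⟩ := h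
  obtain ⟨p', q', rfl, rfl⟩ := h'
  exact ⟨p + p', q + q', by push_cast; ring, by push_cast; ring⟩

lemma cp_sub {d : ℚ} {x y x' y' : ℝ} (h : ConjPair d x y) (h' : ConjPair d x' y') :
    ConjPair d (x - x') (y - y') := by
  obtain ⟨p, q, rfl, rfl⟩ := h
  obtain ⟨p', q', rfl, rfl⟩ := h'
  exact ⟨p - p', q - q', by push_cast; ring, by push_cast; ring⟩

lemma cp_mul {d : ℚ} (hd : 0 ≤ d) {x y x' y' : ℝ} (h : ConjPair d x y) (h' : ConjPair d x' y') :
    ConjPair d (x * x') (y * y') := by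
  obtain ⟨p, q, rfl, rfl⟩ := h
  obtain ⟨p', q', rfl, rfl⟩ := h'
  have hs : Real.sqrt d * Real.sqrt d = (d : ℝ) :=
    Real.mul_self_sqrt (by exact_mod_cast hd)
  refine ⟨p * p' + q * q' * d, p * q' + q * p', ?_, ?_⟩ <;>
    · push_cast
      linear_combination ((q : ℝ) * q') * hs

lemma cp_inv {d : ℚ} (hd : 0 ≤ d) (hirr : Irrational (Real.sqrt d)) {x y : ℝ}
    (hx : x ≠ 0) (h : ConjPair d x y) : ConjPair d x⁻¹ y⁻¹ := by
  obtain ⟨p, q, rfl, rfl⟩ := h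
  have hs : Real.sqrt d * Real.sqrt d = (d : ℝ) :=
    Real.mul_self_sqrt (by exact_mod_cast hd)
  have hy : (p : ℝ) - q * Real.sqrt d ≠ 0 := by
    intro h0
    rcases eq_or_ne q 0 with rfl | hq
    · apply hx; push_cast at h0 ⊢; simpa using h0
    · apply hirr
      refine ⟨p / q, ?_⟩
      push_cast
      field_simp
      linarith [h0]
  set N : ℚ := p^2 - q^2 * d with hN_def
  have hNr : (N : ℝ) = ((p : ℝ) + q * Real.sqrt d) * ((p : ℝ) - q * Real.sqrt d) := by
    rw [hN_def]
    push_cast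
    linear_combination ((q:ℝ)^2) * hs
  have hN0 : (N : ℝ) ≠ 0 := by rw [hNr]; exact mul_ne_zero hx hy
  have hNq : N ≠ 0 := by exact_mod_cast hN0
  refine ⟨p / N, -q / N, ?_, ?_⟩
  · apply inv_eq_of_mul_eq_one_right
    push_cast
    have e : (p:ℝ)/N + (-(q:ℝ))/N * Real.sqrt d = ((p:ℝ) - (q:ℝ) * Real.sqrt d)/(N:ℝ) := by ring
    rw [e, mul_div_assoc', ← hNr]
    exact div_self hN0
  · apply inv_eq_of_mul_eq_one_right
    push_cast
    have e : (p:ℝ)/N - (-(q:ℝ))/N * Real.sqrt d = ((p:ℝ) + (q:ℝ) * Real.sqrt d)/(N:ℝ) := by ring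
    rw [e, mul_div_assoc', mul_comm ((p:ℝ) - (q:ℝ) * Real.sqrt d), ← hNr]
    exact div_self hN0



lemma stdTrap_eq (a : ℝ) (ha : 1 < a) :
    stdTrap a = {p : ℝ × ℝ | 0 ≤ p.2 ∧ p.2 ≤ 1 ∧ p.2 ≤ p.1 ∧ p.1 ≤ a + 1 - p.2} := by
  apply le_antisymm
  · apply convexHull_min
    · intro p hp
      simp only [Set.mem_insert_iff, Set.mem_singleton_iff] at hp
      rcases hp with rfl | rfl | rfl | rfl <;>
        simp only [Set.mem_setOf_eq] <;> norm_num <;> linarith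
    · rintro x ⟨hx0, hx1, hx2, hx3⟩ y ⟨hy0, hy1, hy2, hy3⟩ s t hs ht hst
      have e1 : (s • x + t • y).1 = s * x.1 + t * y.1 := rfl
      have e2 : (s • x + t • y).2 = s * x.2 + t * y.2 := rfl
      refine ⟨?_, ?_, ?_, ?_⟩ <;> simp only [e1, e2] <;> nlinarith [mul_le_mul_of_nonneg_left hx3 hs,
        mul_le_mul_of_nonneg_left hy3 ht, mul_le_mul_of_nonneg_left hx2 hs,
        mul_le_mul_of_nonneg_left hy2 ht, mul_le_mul_of_nonneg_left hx1 hs,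
        mul_le_mul_of_nonneg_left hy1 ht, mul_nonneg hs hx0, mul_nonneg ht hy0]
  · rintro ⟨x, y⟩ ⟨h0, h1, h2, h3⟩
    simp only [Set.mem_setOf_eq] at h0 h1 h2 h3
    have hD : (0:ℝ) < a + 1 - 2*y := by linarith
    set s : ℝ := (x - y) / (a + 1 - 2*y) with hs_def
    have hs0 : 0 ≤ s := div_nonneg (by linarith) hD.le
    have hs1 : s ≤ 1 := by rw [div_le_one hD]; linarith
    have hhull := convex_convexHull ℝ ({((0:ℝ), (0:ℝ)), (a + 1, 0), (a, 1), (1, 1)} : Set (ℝ × ℝ))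
    have m0 : ((0:ℝ), (0:ℝ)) ∈ stdTrap a := subset_convexHull ℝ _ (by simp)
    have m1 : ((a + 1 : ℝ), (0:ℝ)) ∈ stdTrap a := subset_convexHull ℝ _ (by simp)
    have m2 : ((a:ℝ), (1:ℝ)) ∈ stdTrap a := subset_convexHull ℝ _ (by simp)
    have m3 : ((1:ℝ), (1:ℝ)) ∈ stdTrap a := subset_convexHull ℝ _ (by simp)
    have q0 : (s * (a+1), (0:ℝ)) ∈ stdTrap a := by
      have := (convex_convexHull ℝ _).segment_subset m0 m1
      apply this
      exact ⟨1 - s, s, by linarith, hs0, by ring, by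
        show ((1-s) * 0 + s * (a+1), (1-s) * 0 + s * 0) = _
        norm_num⟩
    have q1 : ((1 + s * (a-1) : ℝ), (1:ℝ)) ∈ stdTrap a := by
      have := (convex_convexHull ℝ _).segment_subset m3 m2
      apply this
      exact ⟨1 - s, s, by linarith, hs0, by ring, by
        show ((1-s) * 1 + s * a, (1-s) * 1 + s * 1) = _
        rw [Prod.mk.injEq]; constructor <;> ring⟩
    have := (convex_convexHull ℝ _).segment_subset q0 q1
    apply this
    refine ⟨1 - y, y, by linarith, h0, by ring, ?_⟩
    have hx : (1-y) * (s * (a+1)) + y * (1 + s * (a-1)) = x := by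
      have : s * (a + 1 - 2*y) = x - y := by
        rw [hs_def]; exact div_mul_cancel₀ _ hD.ne'
      nlinarith [this]
    show ((1-y) * (s * (a+1)) + y * (1 + s * (a-1)), (1-y) * 0 + y * 1) = (x, y)
    rw [hx]; norm_num

lemma homothety_stdTrap (r : ℝ) (v : ℝ × ℝ) (a : ℝ) (hr : 0 < r) (ha : 1 < a) :
    homothety r v (stdTrap a) = {p : ℝ × ℝ | v.2 ≤ p.2 ∧ p.2 ≤ v.2 + r ∧
      p.2 - v.2 + v.1 ≤ p.1 ∧ p.1 ≤ v.1 + r * (a + 1) - (p.2 - v.2)} := by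
  rw [stdTrap_eq a ha]
  ext p
  simp only [homothety, Set.mem_image, Set.mem_setOf_eq]
  constructor
  · rintro ⟨q, ⟨h0, h1, h2, h3⟩, rfl⟩
    dsimp only
    refine ⟨by nlinarith, by nlinarith, by nlinarith, by nlinarith⟩
  · rintro ⟨h0, h1, h2, h3⟩
    refine ⟨((p.1 - v.1)/r, (p.2 - v.2)/r), ⟨?_, ?_, ?_, ?_⟩, ?_⟩
    · exact div_nonneg (by linarith) hr.le
    · rw [div_le_one hr]; linarith
    · dsimp only
      rw [div_le_div_iff₀ hr hr]; nlinarith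
    · dsimp only
      rw [le_sub_iff_add_le, ← add_div, div_le_iff₀ hr]
      linarith
    · dsimp only
      rw [Prod.mk.injEq]
      constructor <;> field_simp <;> ring

lemma interior_horiz (c : ℝ) : interior {p : ℝ × ℝ | p.2 = c} = (∅ : Set (ℝ × ℝ)) := by
  rw [Set.eq_empty_iff_forall_notMem]
  intro p hp
  rw [mem_interior_iff_mem_nhds, Metric.mem_nhds_iff] at hp
  obtain ⟨ε, hε, hball⟩ := hp
  have hc : p.2 = c := hball (Metric.mem_ball_self hε)
  have hq : (p.1, p.2 + ε/2) ∈ Metric.ball p ε := by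
    rw [Metric.mem_ball, Prod.dist_eq]
    simp only [dist_self]
    rw [max_lt_iff]
    refine ⟨hε, ?_⟩
    rw [Real.dist_eq, show p.2 + ε/2 - p.2 = ε/2 by ring, abs_of_pos (by linarith)]
    linarith
  have h2 := hball hq
  simp only [Set.mem_setOf_eq] at h2
  rw [hc] at h2
  linarith

lemma horiz_segment (c lo hi : ℝ) (h : lo ≤ hi) :
    {p : ℝ × ℝ | p.2 = c ∧ lo ≤ p.1 ∧ p.1 ≤ hi} ⊆ segment ℝ (lo, c) (hi, c) := by
  intro p hp
  obtain ⟨hy, h1, h2⟩ := hp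
  have hpe : p = (p.1, c) := by rw [← hy]
  rw [hpe]
  rcases eq_or_lt_of_le h with rfl | hlt
  · have : p.1 = lo := le_antisymm h2 h1
    rw [this]
    exact left_mem_segment ℝ _ _
  · set t : ℝ := (p.1 - lo)/(hi - lo) with ht_def
    have ht0 : 0 ≤ t := div_nonneg (by linarith) (by linarith)
    have ht1 : t ≤ 1 := by rw [ht_def, div_le_one (by linarith)]; linarith
    refine ⟨1 - t, t, by linarith, ht0, by ring, ?_⟩
    rw [Prod.mk.injEq]
    constructor
    · show (1 - t) * lo + t * hi = p.1
      have : t * (hi - lo) = p.1 - lo := by rw [ht_def]; exact div_mul_cancel₀ _ (sub_pos.mpr hlt).ne'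
      nlinarith [this]
    · show (1 - t) * c + t * c = c
      ring


lemma tile (a : ℝ) (ha : 1 < a) :
    ∀ n : ℕ, ∀ b : ℝ, 1 < b → Gfun b = Gfun a ^ (n+1) →
    ∀ r : ℝ, 0 < r → ∀ v : ℝ × ℝ, TrivialTiling {stdTrap a} (homothety r v (stdTrap b)) := by
  intro n
  induction n with
  | zero =>
    intro b hb hG r hr v
    have hba : b = a := by
      rw [pow_one, Gfun, Gfun, div_eq_div_iff (by linarith) (by linarith)] at hG
      nlinarith [hG]
    subst hba
    exact TrivialTiling.single r v (stdTrap b) hr rfl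
  | succ n ih =>
    intro b hb hG r hr v
    have hTa0 : 0 < Gfun a := div_pos (by linarith) (by linarith)
    have hTa1 : Gfun a < 1 := by rw [Gfun, div_lt_one (by linarith)]; linarith
    have hGlt : Gfun b < Gfun a := by
      rw [hG]
      calc Gfun a ^ (n+1+1) < Gfun a ^ 1 := by
            apply pow_lt_pow_right_of_lt_one₀ hTa0 hTa1; omega
        _ = Gfun a := pow_one _
    have hba : b < a := by
      rw [Gfun, Gfun, div_lt_div_iff₀ (by linarith) (by linarith)] at hGlt
      nlinarith [hGlt]
    set h : ℝ := (b+1)/(a+1) with hh_def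
    have hh0 : 0 < h := div_pos (by linarith) (by linarith)
    have hh1 : h < 1 := by rw [hh_def, div_lt_one (by linarith)]; linarith
    set b' : ℝ := (b - h)/(1 - h) with hb'_def
    have hb' : 1 < b' := by
      rw [hb'_def, lt_div_iff₀ (by linarith)]
      linarith
    have h1ne : (1:ℝ) - h ≠ 0 := by linarith
    have e1 : b' - 1 = (b-1)/(1-h) := by rw [hb'_def]; field_simp; ring
    have e2 : b' + 1 = (b+1-2*h)/(1-h) := by rw [hb'_def]; field_simp; ring
    have e3 : b+1-2*h = (b+1) * Gfun a := by
      rw [Gfun, hh_def]; field_simp; ring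
    have e4 : b-1 = (b+1) * Gfun a ^ (n+1+1) := by
      rw [← hG, Gfun]; field_simp
    have hGb' : Gfun b' = Gfun a ^ (n+1) := by
      rw [Gfun, e1, e2, e3, e4]
      rw [div_div_div_cancel_right₀]
      · rw [div_eq_iff (mul_ne_zero (by linarith : b + (1:ℝ) ≠ 0) hTa0.ne')]
        ring
      · exact h1ne
    -- geometric split
    set X : Set (ℝ × ℝ) := homothety (r*h) v (stdTrap a) with hX_def
    set Y : Set (ℝ × ℝ) := homothety (r*(1-h)) (v.1 + r*h, v.2 + r*h) (stdTrap b') with hY_def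
    have hrh : 0 < r*h := mul_pos hr hh0
    have hr1h : 0 < r*(1-h) := mul_pos hr (by linarith)
    have hX : X = {p : ℝ × ℝ | v.2 ≤ p.2 ∧ p.2 ≤ v.2 + r*h ∧
        p.2 - v.2 + v.1 ≤ p.1 ∧ p.1 ≤ v.1 + (r*h) * (a + 1) - (p.2 - v.2)} :=
      homothety_stdTrap (r*h) v a hrh ha
    have hY : Y = {p : ℝ × ℝ | v.2 + r*h ≤ p.2 ∧ p.2 ≤ v.2 + r*h + r*(1-h) ∧
        p.2 - (v.2 + r*h) + (v.1 + r*h) ≤ p.1 ∧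
        p.1 ≤ v.1 + r*h + (r*(1-h)) * (b' + 1) - (p.2 - (v.2 + r*h))} :=
      homothety_stdTrap (r*(1-h)) (v.1 + r*h, v.2 + r*h) b' hr1h hb'
    have hA : homothety r v (stdTrap b) = {p : ℝ × ℝ | v.2 ≤ p.2 ∧ p.2 ≤ v.2 + r ∧
        p.2 - v.2 + v.1 ≤ p.1 ∧ p.1 ≤ v.1 + r * (b + 1) - (p.2 - v.2)} :=
      homothety_stdTrap r v b hr hb
    have k1 : (r*h) * (a+1) = r * (b+1) := by
      rw [hh_def]; field_simp
    have k2 : (r*(1-h)) * (b'+1) = r*(b+1) - 2*(r*h) := by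
      rw [hb'_def]; field_simp; ring
    have hU : homothety r v (stdTrap b) = X ∪ Y := by
      rw [hA, hX, hY]
      ext p
      simp only [Set.mem_union, Set.mem_setOf_eq]
      constructor
      · rintro ⟨c1, c2, c3, c4⟩
        by_cases hc : p.2 ≤ v.2 + r*h
        · exact Or.inl ⟨c1, hc, c3, by linarith⟩
        · push_neg at hc
          exact Or.inr ⟨hc.le, by linarith, by linarith, by linarith⟩
      · rintro (⟨c1, c2, c3, c4⟩ | ⟨c1, c2, c3, c4⟩)
        · exact ⟨c1, by nlinarith, c3, by linarith⟩
        · exact ⟨by nlinarith, by linarith, by linarith, by linarith⟩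
    have hsub : X ∩ Y ⊆ {p : ℝ × ℝ | p.2 = v.2 + r*h ∧
        v.1 + r*h ≤ p.1 ∧ p.1 ≤ v.1 + r*(b+1) - r*h} := by
      rw [hX, hY]
      rintro p ⟨⟨_, x2, x3, x4⟩, ⟨y1, _, _, _⟩⟩
      have hpc : p.2 = v.2 + r*h := le_antisymm x2 y1
      exact ⟨hpc, by linarith, by linarith⟩
    have hint : interior X ∩ interior Y = ∅ := by
      rw [← interior_inter, ← Set.subset_empty_iff]
      calc interior (X ∩ Y) ⊆ interior {p : ℝ × ℝ | p.2 = v.2 + r*h} := by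
            apply interior_mono
            intro p hp
            exact (hsub hp).1
        _ = ∅ := interior_horiz _
    have hseg : X ∩ Y ⊆ segment ℝ (v.1 + r*h, v.2 + r*h) (v.1 + r*(b+1) - r*h, v.2 + r*h) := by
      intro p hp
      apply horiz_segment (v.2 + r*h) (v.1 + r*h) (v.1 + r*(b+1) - r*h) (by nlinarith)
      exact hsub hp
    rw [hU]
    exact TrivialTiling.split (X ∪ Y) X Y _ _
      (TrivialTiling.single (r*h) v (stdTrap a) hrh rfl)
      (ih b' hb' hGb' (r*(1-h)) hr1h (v.1 + r*h, v.2 + r*h))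
      rfl hint hseg

lemma homothety_id (S : Set (ℝ × ℝ)) : homothety 1 (0,0) S = S := by
  unfold homothety
  simp

lemma cp_pow {d : ℚ} (hd : 0 ≤ d) {x y : ℝ} (h : ConjPair d x y) (n : ℕ) :
    ConjPair d (x^n) (y^n) := by
  induction n with
  | zero =>
    simpa using cp_rat d 1
  | succ n ih =>
    rw [pow_succ, pow_succ]
    exact cp_mul hd ih h

/-- **Sharpness of the logarithmic condition.** For `a ∈ ℚ[√d]` with `1 < ā < a` there are
infinitely many distinct `b ∈ ℚ[√d]` with `ln G(b)/ln G(b̄) = ln G(a)/ln G(ā)` such that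
`t(b)` admits a trivial tiling by homothetic copies of `t(a)`. -/
theorem statement4 (d : ℚ) (hd : 0 < d) (hirr : Irrational (Real.sqrt d))
    (pa qa : ℚ) (a abar : ℝ)
    (hae : a = pa + qa * Real.sqrt d) (habar : abar = pa - qa * Real.sqrt d)
    (ha1 : 1 < abar) (ha2 : abar < a) :
    {b : ℝ | ∃ pb qb : ℚ, b = pb + qb * Real.sqrt d ∧
      Real.log (Gfun b) / Real.log (Gfun ((pb : ℝ) - qb * Real.sqrt d)) =
        Real.log (Gfun a) / Real.log (Gfun abar) ∧
      TrivialTiling {stdTrap a} (stdTrap b)}.Infinite := by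
  have hd' : (0:ℚ) ≤ d := hd.le
  have had : 1 < a := lt_trans ha1 ha2
  have hT0 : 0 < Gfun a := div_pos (by linarith) (by linarith)
  have hT1 : Gfun a < 1 := by rw [Gfun, div_lt_one (by linarith)]; linarith
  have hT'0 : 0 < Gfun abar := div_pos (by linarith) (by linarith)
  have hT'1 : Gfun abar < 1 := by rw [Gfun, div_lt_one (by linarith)]; linarith
  have cp1 : ConjPair d (1:ℝ) (1:ℝ) := by simpa using cp_rat d 1
  have cpa : ConjPair d a abar := ⟨pa, qa, hae, habar⟩
  have cpG : ConjPair d (Gfun a) (Gfun abar) := by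
    rw [Gfun, Gfun, div_eq_mul_inv, div_eq_mul_inv]
    exact cp_mul hd' (cp_sub cpa cp1)
      (cp_inv hd' hirr (by linarith) (cp_add cpa cp1))
  set f : ℕ → ℝ := fun n => (1 + Gfun a ^ (n+1))/(1 - Gfun a ^ (n+1)) with hf_def
  apply Set.infinite_of_injective_forall_mem (f := f)
  case hi => -- injectivity
    intro m n hmn
    have hm1 : Gfun a ^ (m+1) < 1 := pow_lt_one₀ hT0.le hT1 (Nat.succ_ne_zero m)
    have hn1 : Gfun a ^ (n+1) < 1 := pow_lt_one₀ hT0.le hT1 (Nat.succ_ne_zero n)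
    rw [hf_def] at hmn
    simp only at hmn
    rw [div_eq_div_iff (by linarith) (by linarith)] at hmn
    have : Gfun a ^ (m+1) = Gfun a ^ (n+1) := by nlinarith [hmn]
    have := (pow_right_strictAnti₀ hT0 hT1).injective this
    omega
  case hf => -- membership
    intro n
    set t : ℝ := Gfun a ^ (n+1) with ht_def
    set t' : ℝ := Gfun abar ^ (n+1) with ht'_def
    have ht0 : 0 < t := pow_pos hT0 _
    have ht1 : t < 1 := pow_lt_one₀ hT0.le hT1 (Nat.succ_ne_zero n)
    have ht'0 : 0 < t' := pow_pos hT'0 _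
    have ht'1 : t' < 1 := pow_lt_one₀ hT'0.le hT'1 (Nat.succ_ne_zero n)
    set bb : ℝ := (1 + t')/(1 - t') with hbb_def
    have hfn : f n = (1 + t)/(1 - t) := rfl
    have hb1 : 1 < f n := by
      rw [hfn, lt_div_iff₀ (by linarith)]; linarith
    have hGb : Gfun (f n) = t := by
      rw [hfn, Gfun]
      have h1t : (1:ℝ) - t ≠ 0 := by linarith
      have e1 : (1 + t)/(1 - t) - 1 = 2*t/(1-t) := by
        field_simp; try ring
      have e2 : (1 + t)/(1 - t) + 1 = 2/(1-t) := by
        field_simp; try ring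
      rw [e1, e2, div_div_div_cancel_right₀]
      · ring
      · exact h1t
    have hGbb : Gfun bb = t' := by
      rw [hbb_def, Gfun]
      have h1t : (1:ℝ) - t' ≠ 0 := by linarith
      have e1 : (1 + t')/(1 - t') - 1 = 2*t'/(1-t') := by
        field_simp; try ring
      have e2 : (1 + t')/(1 - t') + 1 = 2/(1-t') := by
        field_simp; try ring
      rw [e1, e2, div_div_div_cancel_right₀]
      · ring
      · exact h1t
    have cpt : ConjPair d t t' := cp_pow hd' cpG (n+1)
    have cpb : ConjPair d (f n) bb := by
      rw [hfn, hbb_def, div_eq_mul_inv, div_eq_mul_inv]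
      exact cp_mul hd' (cp_add cp1 cpt)
        (cp_inv hd' hirr (by linarith) (cp_sub cp1 cpt))
    obtain ⟨pb, qb, hbe, hbbe⟩ := cpb
    refine ⟨pb, qb, hbe, ?_, ?_⟩
    · rw [← hbbe, hGb, hGbb, ht_def, ht'_def, Real.log_pow, Real.log_pow]
      exact mul_div_mul_left _ _ (by exact_mod_cast Nat.succ_ne_zero n)
    · have := tile a had n (f n) hb1 (by rw [hGb]) 1 one_pos (0,0)
      rwa [homothety_id] at this
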